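/- Let γ > 1 be real, let ρ, ρ̄, n, n̄ be positive reals, and let m, m̄, w, w̄ ∈ ℝ³. Set u = m/ρ, ū = m̄/ρ̄, v = w/n, v̄ = w̄/n̄, and define the entropy E(ρ, m, n, w) := ‖m‖²/(2ρ) + ‖w‖²/(2n) + ρ·log ρ + n^γ/(γ−1). Then E(ρ̄, m̄, n̄, w̄) − E(ρ, m, n, w) − [ (1 + log ρ − ‖u‖²/2)·(ρ̄ − ρ) + ⟨u, m̄ − m⟩ + ((γ/(γ−1))·n^{γ−1} − ‖v‖²/2)·(n̄ − n) + ⟨v, w̄ − w⟩ ] = (ρ̄/2)·‖ū − u‖² + (n̄/2)·‖v̄ − v‖² + P(ρ̄|ρ) + P̃(n̄|n). -/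

import Mathlib

open Real
open scoped RealInnerProductSpace

/-- The relative pressure `P(x|y) = x log x - y log y + (y - x)(1 + log y)`. -/
noncomputable def relPressure (x y : ℝ) : ℝ :=
  x * Real.log x - y * Real.log y + (y - x) * (1 + Real.log y)

/-- The relative pressure
`P̃(x|y) = (1/(γ-1))(x^γ - y^γ) + (γ/(γ-1))(y - x) y^(γ-1)` for a parameter `γ`. -/
noncomputable def relPressureP (γ x y : ℝ) : ℝ :=
  (1 / (γ - 1)) * (x ^ γ - y ^ γ) + (γ / (γ - 1)) * (y - x) * y ^ (γ - 1)

/-- The macroscopic entropy `E(ρ, m, n, w) = ‖m‖²/(2ρ) + ‖w‖²/(2n) + ρ log ρ + n^γ/(γ-1)`. -/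
noncomputable def entropyE (γ ρ n : ℝ) (m w : EuclideanSpace ℝ (Fin 3)) : ℝ :=
  ‖m‖ ^ 2 / (2 * ρ) + ‖w‖ ^ 2 / (2 * n) + ρ * Real.log ρ + n ^ γ / (γ - 1)

/-- The relative entropy `E(Ū) - E(U) - DE(U)(Ū - U)` equals
`(ρ̄/2)‖ū - u‖² + (n̄/2)‖v̄ - v‖² + P(ρ̄|ρ) + P̃(n̄|n)`. -/
theorem relative_entropy_identity (γ : ℝ) (hγ : 1 < γ)
    (ρ ρ' n n' : ℝ) (hρ : 0 < ρ) (hρ' : 0 < ρ') (hn : 0 < n) (hn' : 0 < n')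
    (m m' w w' : EuclideanSpace ℝ (Fin 3))
    (u u' v v' : EuclideanSpace ℝ (Fin 3))
    (hu : u = ρ⁻¹ • m) (hu' : u' = ρ'⁻¹ • m')
    (hv : v = n⁻¹ • w) (hv' : v' = n'⁻¹ • w') :
    entropyE γ ρ' n' m' w' - entropyE γ ρ n m w -
      ((1 + Real.log ρ - ‖u‖ ^ 2 / 2) * (ρ' - ρ) + ⟪u, m' - m⟫ +
        ((γ / (γ - 1)) * n ^ (γ - 1) - ‖v‖ ^ 2 / 2) * (n' - n) + ⟪v, w' - w⟫) =
    (ρ' / 2) * ‖u' - u‖ ^ 2 + (n' / 2) * ‖v' - v‖ ^ 2 +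
      relPressure ρ' ρ + relPressureP γ n' n := by
  have hm : m = ρ • u := by rw [hu, smul_smul]; field_simp; rw [one_smul]
  have hm' : m' = ρ' • u' := by rw [hu', smul_smul]; field_simp; rw [one_smul]
  have hw : w = n • v := by rw [hv, smul_smul]; field_simp; rw [one_smul]
  have hw' : w' = n' • v' := by rw [hv', smul_smul]; field_simp; rw [one_smul]
  subst hm hm' hw hw'
  have hns : ∀ (a : ℝ) (x : EuclideanSpace ℝ (Fin 3)), 0 < a → ‖a • x‖ ^ 2 = a ^ 2 * ‖x‖ ^ 2 := by
    intro a x ha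
    rw [norm_smul, mul_pow, Real.norm_eq_abs, sq_abs]
  simp only [entropyE, relPressure, relPressureP, inner_sub_right, real_inner_smul_right,
    real_inner_self_eq_norm_sq, hns _ _ hρ, hns _ _ hρ', hns _ _ hn, hns _ _ hn',
    norm_sub_sq_real, real_inner_comm u' u, real_inner_comm v' v]
  have h1 : ρ ≠ 0 := hρ.ne'
  have h2 : ρ' ≠ 0 := hρ'.ne'
  have h3 : n ≠ 0 := hn.ne'
  have h4 : n' ≠ 0 := hn'.ne'
  have h5 : γ - 1 ≠ 0 := by linarith
  field_simp
  ring
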